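/- The rank function of an evidential structure need not be monotone with respect to the strict specificity order: there exists an evidential structure containing elements z ≺ y with ρ(z) = 2 and ρ(y) = 3. -/

import Mathlib

namespace Evid

variable {X : Type*}

/-- `x` is strictly more specific than `y`. -/
def Strict (le : X → X → Prop) (x y : X) : Prop := le x y ∧ ¬ le y x

/-- `x` is immediately more specific than `y`. -/
def Imm (le : X → X → Prop) (x y : X) : Prop :=
  Strict le x y ∧ ¬ ∃ w, Strict le x w ∧ Strict le w y

/-- `x` and `y` are incompatible: no common lower bound. -/
def Incompat (le : X → X → Prop) (x y : X) : Prop :=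
  ¬ ∃ z, le z x ∧ le z y

/-- An evidential structure on carrier `X` with relation `le` and root `root`. -/
structure IsEvid (le : X → X → Prop) (root : X) : Prop where
  refl : ∀ x, le x x
  trans : ∀ x y z, le x y → le y z → le x z
  wf : ¬ ∃ f : ℕ → X, ∀ k, Strict le (f (k+1)) (f k)
  root_top : ∀ x, x ≠ root → Strict le x root
  nontriv : ∃ x, x ≠ root
  interp : ∀ x z, Strict le x z → ∃ y, Imm le x y ∧ le y z
  finBranch : ∀ x, {w | Imm le w x}.Finite
  incompat_wit : ∀ x z, ¬ le x z → ∃ y, le y x ∧ Incompat le y z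

/-- There is a chain of `n` immediate-specificity steps from `x` up to the root. -/
def ChainSpec (le : X → X → Prop) (root x : X) (n : ℕ) : Prop :=
  (x = root ∧ n = 0) ∨
  ∃ g : ℕ → X, g 0 = x ∧ g n = root ∧ ∀ k < n, Imm le (g k) (g (k+1))

/-- `ρ` is the rank function: `ρ x` is the minimal chain length from `x` to the root. -/
def IsRank (le : X → X → Prop) (root : X) (ρ : X → ℕ) : Prop :=
  ∀ x, ChainSpec le root x (ρ x) ∧ ∀ n, ChainSpec le root x n → ρ x ≤ n

/-- An experimentation tree `(T, leT)` inside the evidential structure `(X, le)`. -/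
structure IsTreeIn (le : X → X → Prop) (root : X) (T : Set X) (leT : X → X → Prop) : Prop where
  root_mem : root ∈ T
  nontriv : T ≠ {root}
  sub : ∀ x y, leT x y → le x y ∧ x ∈ T ∧ y ∈ T
  refl : ∀ x ∈ T, leT x x
  trans : ∀ x y z, leT x y → leT y z → leT x z
  unique_succ : ∀ x ∈ T, x ≠ root → ∃! y, Imm leT x y
  imm_imm : ∀ x y, Imm leT x y → Imm le x y
  fork : ∀ x ∈ T, (∃ w, Strict leT w x) → ∃ y z, Imm leT y x ∧ Imm leT z x ∧ y ≠ z
  pred_incompat : ∀ x y z, Imm leT y x → Imm leT z x → y ≠ z → Incompat le y z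
  unbiased : ∀ z x, x ∈ T → Strict le z x → (∃ w, Strict leT w x) →
    ∃ v w, le v z ∧ le v w ∧ Imm leT w x

/-- `x` is maximally specific. -/
def MaxSpec (le : X → X → Prop) (x : X) : Prop := ¬ ∃ w, Strict le w x

/-- An evidential structure that is itself an experimentation tree. -/
def IsExpTree (le : X → X → Prop) (root : X) : Prop :=
  IsEvid le root ∧
  (∀ x, x ≠ root → ∃! y, Imm le x y) ∧
  (∀ x, ¬ MaxSpec le x → ∃ y z, Imm le y x ∧ Imm le z x ∧ y ≠ z) ∧
  (∀ x y z, Imm le y x → Imm le z x → y ≠ z → Incompat le y z)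
inductive E : Type
  | root | q | s | t | u | v | w | x | y | z
  deriving DecidableEq

instance : Fintype E where
  elems := {.root, .q, .s, .t, .u, .v, .w, .x, .y, .z}
  complete := by intro a; cases a <;> simp

def leB : E → E → Bool
  | _, .root => true
  | a, .q => a = .q || a = .s || a = .z
  | a, .w => a = .w || a = .t || a = .x || a = .u || a = .y || a = .v || a = .z
  | a, .s => a = .s
  | a, .t => a = .t
  | a, .x => a = .x || a = .u || a = .y || a = .v || a = .z
  | a, .u => a = .u
  | a, .y => a = .y || a = .v || a = .z
  | a, .v => a = .v
  | a, .z => a = .z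

def le' (a b : E) : Prop := leB a b = true

instance : DecidableRel le' := fun _ b => inferInstanceAs (Decidable (_ = true))

instance : DecidableRel (Strict le') := fun _ _ => inferInstanceAs (Decidable (_ ∧ ¬ _))

instance : DecidableRel (Imm le') := fun _ _ => inferInstanceAs (Decidable (_ ∧ ¬ ∃ _, _))

instance : DecidableRel (Incompat le') := fun _ _ => inferInstanceAs (Decidable (¬ ∃ _, _))

/-- depth measure: strictly increases when going down (more specific). -/
def m : E → ℕ
  | .root => 0 | .q => 1 | .w => 1 | .s => 2 | .t => 2 | .x => 2
  | .u => 3 | .y => 3 | .v => 4 | .z => 4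

/-- rank function -/
def ρ' : E → ℕ
  | .root => 0 | .q => 1 | .w => 1 | .s => 2 | .z => 2 | .t => 2 | .x => 2
  | .u => 3 | .y => 3 | .v => 4

/-- chosen parent -/
def par : E → E
  | .root => .root | .q => .root | .w => .root | .s => .q | .z => .q
  | .t => .w | .x => .w | .u => .x | .y => .x | .v => .y

theorem stmt4 :
    ∃ (X : Type) (le : X → X → Prop) (root : X) (ρ : X → ℕ),
      IsEvid le root ∧ IsRank le root ρ ∧
      ∃ z y : X, Strict le z y ∧ ρ z = 2 ∧ ρ y = 3 := by
  refine ⟨E, le', E.root, ρ', ?_, ?_, E.z, E.y, by decide, rfl, rfl⟩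
  · refine ⟨by decide, by decide, ?_, by decide, by decide, by decide,
      fun x => Set.toFinite _, by decide⟩
    rintro ⟨f, hf⟩
    have key : ∀ a b : E, Strict le' a b → m b < m a := by decide
    have grow : ∀ n, m (f 0) + n ≤ m (f n) := by
      intro n
      induction n with
      | zero => simp
      | succ n ih =>
        have := key _ _ (hf n)
        omega
    have hb : ∀ e : E, m e ≤ 4 := by decide
    have := grow 5
    have := hb (f 5)
    omega
  · intro x
    constructor
    · cases x with
      | root => exact Or.inl ⟨rfl, rfl⟩
      | q => exact Or.inr ⟨fun k => par^[k] E.q, rfl, by decide, by decide⟩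
      | s => exact Or.inr ⟨fun k => par^[k] E.s, rfl, by decide, by decide⟩
      | t => exact Or.inr ⟨fun k => par^[k] E.t, rfl, by decide, by decide⟩
      | u => exact Or.inr ⟨fun k => par^[k] E.u, rfl, by decide, by decide⟩
      | v => exact Or.inr ⟨fun k => par^[k] E.v, rfl, by decide, by decide⟩
      | w => exact Or.inr ⟨fun k => par^[k] E.w, rfl, by decide, by decide⟩
      | x => exact Or.inr ⟨fun k => par^[k] E.x, rfl, by decide, by decide⟩
      | y => exact Or.inr ⟨fun k => par^[k] E.y, rfl, by decide, by decide⟩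
      | z => exact Or.inr ⟨fun k => par^[k] E.z, rfl, by decide, by decide⟩
    · rintro n (⟨hx, hn⟩ | ⟨g, h0, hn, hk⟩)
      · subst hx; subst hn; simp [ρ']
      · have mono : ∀ a b : E, Imm le' a b → ρ' a ≤ ρ' b + 1 := by decide
        have key : ∀ j, j ≤ n → ρ' (g 0) ≤ ρ' (g j) + j := by
          intro j hj
          induction j with
          | zero => simp
          | succ j ih =>
            have h1 := mono (g j) (g (j + 1)) (hk j (by omega))
            have h2 := ih (by omega)
            omega
        have h3 := key n le_rfl
        rw [hn] at h3
        rw [← h0]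
        simpa [ρ'] using h3

end Evid
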